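/- If β < β₀, then the origin is a globally attracting fixed point on [0,1]^n: for every x ∈ [0,1]^n, the sequence of iterates F^k(x) converges to 0 as k → ∞. -/

import Mathlib

open Filter Finset
open Matrix

/-- The MMCA map `F`. -/
noncomputable def F {n : ℕ} (R : Matrix (Fin n) (Fin n) ℝ) (β μ : ℝ) (x : Fin n → ℝ) :
    Fin n → ℝ :=
  fun i => 1 - (1 - (1 - μ) * x i) * ∏ j, (1 - β * R i j * x j)

/-- Irreducibility of a (nonnegative) square matrix. -/
def MatIrred {n : ℕ} (R : Matrix (Fin n) (Fin n) ℝ) : Prop :=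
  ∀ i j : Fin n, ∃ k : ℕ, 0 < k ∧ (R ^ k) i j ≠ 0

/-- Spectral radius of a real matrix, as the supremum of the absolute values of the
real spectrum (appropriate here since `R` is symmetric). -/
noncomputable def specRad {n : ℕ} (R : Matrix (Fin n) (Fin n) ℝ) : ℝ :=
  sSup {r : ℝ | ∃ z ∈ spectrum ℝ R, |z| = r}

/-- Weierstrass product inequality. -/
lemma weier {ι : Type*} (s : Finset ι) (f : ι → ℝ) (h0 : ∀ i ∈ s, 0 ≤ f i)
    (h1 : ∀ i ∈ s, f i ≤ 1) : 1 - ∑ i ∈ s, f i ≤ ∏ i ∈ s, (1 - f i) := by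
  induction s using Finset.cons_induction with
  | empty => simp
  | cons a s ha ih =>
    rw [Finset.prod_cons, Finset.sum_cons]
    have h0a := h0 a (Finset.mem_cons_self a s)
    have h1a := h1 a (Finset.mem_cons_self a s)
    have ih' := ih (fun i hi => h0 i (Finset.mem_cons_of_mem hi))
      (fun i hi => h1 i (Finset.mem_cons_of_mem hi))
    have hp0 : (0:ℝ) ≤ ∏ i ∈ s, (1 - f i) :=
      Finset.prod_nonneg fun i hi => by
        have := h1 i (Finset.mem_cons_of_mem hi); linarith
    have hp1 : ∏ i ∈ s, (1 - f i) ≤ 1 :=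
      Finset.prod_le_one (fun i hi => by
        have := h1 i (Finset.mem_cons_of_mem hi); linarith)
        (fun i hi => by have := h0 i (Finset.mem_cons_of_mem hi); linarith)
    nlinarith

theorem origin_global_attractor (n : ℕ) (hn : 2 ≤ n) (R : Matrix (Fin n) (Fin n) ℝ)
    (hsymm : R.IsSymm) (hR : ∀ i j, R i j ∈ Set.Icc (0:ℝ) 1)
    (hdiag : ∀ i, R i i = 0) (hirr : MatIrred R)
    (β μ : ℝ) (hβ : β ∈ Set.Ioo (0:ℝ) 1) (hμ : μ ∈ Set.Ioo (0:ℝ) 1)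
    (hlt : β < μ / specRad R) (x : Fin n → ℝ) (hx : ∀ i, x i ∈ Set.Icc (0:ℝ) 1) :
    Tendsto (fun k => (F R β μ)^[k] x) atTop (nhds 0) := by
  obtain ⟨hβ0, hβ1⟩ := hβ
  obtain ⟨hμ0, hμ1⟩ := hμ
  haveI : NeZero n := ⟨by omega⟩
  -- `specRad R` is positive and `β * specRad R < μ`
  have hs0 : 0 < specRad R := by
    by_contra h
    push_neg at h
    have : μ / specRad R ≤ 0 := div_nonpos_of_nonneg_of_nonpos hμ0.le h
    linarith
  have hβs : β * specRad R < μ := (lt_div_iff₀ hs0).mp hlt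
  -- the linear comparison matrix
  set M : Matrix (Fin n) (Fin n) ℝ := (1 - μ) • (1 : Matrix (Fin n) (Fin n) ℝ) + β • R with hM
  have hMapp : ∀ i j, M i j = (1 - μ) * (if i = j then (1:ℝ) else 0) + β * R i j := by
    intro i j
    simp [hM, Matrix.add_apply, Matrix.smul_apply, Matrix.one_apply, smul_eq_mul]
  have hMnonneg : ∀ i j, 0 ≤ M i j := by
    intro i j
    rw [hMapp]
    split_ifs with h <;> nlinarith [(hR i j).1]
  -- M is hermitian
  have hMherm : M.IsHermitian := by
    show Matrix.conjTranspose M = M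
    ext i j
    simp only [Matrix.conjTranspose_apply, star_trivial, hMapp]
    rw [hsymm.apply i j]
    by_cases h : i = j
    · subst h; simp
    · simp [h, Ne.symm h]
  set ev := hMherm.eigenvalues with hev
  set U : Matrix (Fin n) (Fin n) ℝ := (hMherm.eigenvectorUnitary : Matrix (Fin n) (Fin n) ℝ) with hU
  -- every eigenvalue of M has absolute value < 1
  have hspec : ∀ lam ∈ spectrum ℝ M, |lam| < 1 := by
    intro lam hlam
    have hMeq : M = (algebraMap ℝ (Matrix (Fin n) (Fin n) ℝ)) (1 - μ) + β • R := by
      rw [hM, Algebra.algebraMap_eq_smul_one]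
    rw [hMeq, ← spectrum.singleton_add_eq] at hlam
    obtain ⟨a, ha, b, hb, hab⟩ := Set.mem_add.mp hlam
    rw [Set.mem_singleton_iff] at ha
    subst ha
    have hβR : (β • R : Matrix (Fin n) (Fin n) ℝ) = (Units.mk0 β hβ0.ne') • R := rfl
    rw [hβR, spectrum.unit_smul_eq_smul] at hb
    obtain ⟨ν, hν, hbν⟩ := hb
    have hbdd : BddAbove {r : ℝ | ∃ z ∈ spectrum ℝ R, |z| = r} := by
      have : {r : ℝ | ∃ z ∈ spectrum ℝ R, |z| = r} = abs '' spectrum ℝ R := by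
        ext r; simp [Set.mem_image]
      rw [this]
      exact ((Matrix.finite_spectrum R).image _).bddAbove
    have hνle : |ν| ≤ specRad R := le_csSup hbdd ⟨ν, hν, rfl⟩
    have hbval : b = β * ν := by
      rw [← hbν]; simp [Units.smul_def, smul_eq_mul]
    have h1 : |lam| ≤ |1 - μ| + |b| := by
      rw [← hab]; exact abs_add_le _ _
    have h2 : |b| ≤ β * specRad R := by
      rw [hbval, abs_mul, abs_of_pos hβ0]
      exact mul_le_mul_of_nonneg_left hνle hβ0.le
    have : |1 - μ| = 1 - μ := abs_of_pos (by linarith)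
    linarith
  -- max abs eigenvalue
  have hne : (Finset.univ : Finset (Fin n)).Nonempty := Finset.univ_nonempty
  set c : ℝ := Finset.univ.sup' hne (fun l => |ev l|) with hc
  have hcev : ∀ l, |ev l| ≤ c := fun l =>
    Finset.le_sup' (f := fun l => |ev l|) (Finset.mem_univ l)
  have hc0 : 0 ≤ c := le_trans (abs_nonneg (ev ⟨0, by omega⟩)) (hcev ⟨0, by omega⟩)
  have hc1 : c < 1 := by
    rw [hc, Finset.sup'_lt_iff]
    intro l _
    exact hspec (ev l) (hMherm.eigenvalues_mem_spectrum_real l)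
  -- powers of M via the spectral theorem
  have hUU : U * Matrix.conjTranspose U = 1 := by
    rw [hU]; exact Unitary.coe_mul_star_self hMherm.eigenvectorUnitary
  have hUU' : Matrix.conjTranspose U * U = 1 := by
    rw [hU]; exact Unitary.coe_star_mul_self hMherm.eigenvectorUnitary
  have hMsp : M = U * Matrix.diagonal ev * Matrix.conjTranspose U := by
    have h := hMherm.spectral_theorem
    convert h using 2
    all_goals (try (ext l; simp [Function.comp, RCLike.ofReal_real_eq_id]))
    rw [Matrix.star_eq_conjTranspose, Matrix.conjTranspose_eq_transpose_of_trivial]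
  have hpow : ∀ k : ℕ, M ^ k =
      U * Matrix.diagonal (fun l => (ev l) ^ k) * Matrix.conjTranspose U := by
    intro k
    induction k with
    | zero =>
      simp only [pow_zero, pow_zero]
      rw [show (Matrix.diagonal fun _ : Fin n => (1:ℝ)) = 1 from Matrix.diagonal_one,
        Matrix.mul_one, hUU]
    | succ k ih =>
      rw [pow_succ, ih, hMsp]
      simp only [Matrix.mul_assoc]
      rw [← Matrix.mul_assoc (Matrix.conjTranspose U) U, hUU', Matrix.one_mul,
        ← Matrix.mul_assoc (Matrix.diagonal fun l => ev l ^ k) (Matrix.diagonal ev),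
        Matrix.diagonal_mul_diagonal]
      have heq : (fun l => ev l ^ k * ev l) = fun l => ev l ^ (k + 1) := by
        ext l; rw [pow_succ]
      rw [heq]
  -- entries of U are bounded by 1
  have hUb : ∀ i l, |U i l| ≤ 1 := by
    intro i l
    have h1 : ∑ m, U i m * U i m = 1 := by
      have := congrArg (fun A => A i i) hUU
      simpa [Matrix.mul_apply, Matrix.conjTranspose_apply] using this
    have h2 : U i l * U i l ≤ 1 := by
      rw [← h1]
      exact Finset.single_le_sum (fun m _ => mul_self_nonneg (U i m)) (Finset.mem_univ l)
    nlinarith [abs_nonneg (U i l), sq_abs (U i l), abs_le_one_iff_mul_self_le_one.mpr h2]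
  -- entry bound for M^k
  have hMk : ∀ (k : ℕ) (i j : Fin n), |(M ^ k) i j| ≤ n * c ^ k := by
    intro k i j
    have hent : (M ^ k) i j = ∑ l, U i l * (ev l) ^ k * U j l := by
      rw [hpow k, Matrix.mul_apply]
      apply Finset.sum_congr rfl
      intro l _
      rw [Matrix.mul_diagonal, Matrix.conjTranspose_apply, star_trivial]
    rw [hent]
    calc |∑ l, U i l * (ev l) ^ k * U j l| ≤ ∑ l, |U i l * (ev l) ^ k * U j l| :=
          Finset.abs_sum_le_sum_abs _ _
      _ ≤ ∑ _l : Fin n, c ^ k := by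
          apply Finset.sum_le_sum
          intro l _
          rw [abs_mul, abs_mul, abs_pow]
          calc |U i l| * |ev l| ^ k * |U j l| ≤ 1 * c ^ k * 1 := by
                apply mul_le_mul
                · exact mul_le_mul (hUb i l) (pow_le_pow_left₀ (abs_nonneg _) (hcev l) k)
                    (pow_nonneg (abs_nonneg _) k) zero_le_one
                · exact hUb j l
                · exact abs_nonneg _
                · positivity
            _ = c ^ k := by ring
      _ = n * c ^ k := by simp [Finset.sum_const, nsmul_eq_mul]
  -- F maps the cube into itself
  have hcube : ∀ y : Fin n → ℝ, (∀ i, y i ∈ Set.Icc (0:ℝ) 1) →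
      ∀ i, F R β μ y i ∈ Set.Icc (0:ℝ) 1 := by
    intro y hy i
    have hfac : ∀ j, (0:ℝ) ≤ 1 - β * R i j * y j ∧ 1 - β * R i j * y j ≤ 1 := by
      intro j
      obtain ⟨hR0, hR1⟩ := hR i j
      obtain ⟨hy0, hy1⟩ := hy j
      constructor
      · nlinarith [mul_nonneg hR0 hy0, mul_le_mul hR1 hy1 hy0 zero_le_one,
          mul_le_mul_of_nonneg_left (mul_le_mul hR1 hy1 hy0 zero_le_one) hβ0.le]
      · nlinarith [mul_nonneg (mul_nonneg hβ0.le hR0) hy0]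
    have hp0 : (0:ℝ) ≤ ∏ j, (1 - β * R i j * y j) :=
      Finset.prod_nonneg fun j _ => (hfac j).1
    have hp1 : ∏ j, (1 - β * R i j * y j) ≤ 1 :=
      Finset.prod_le_one (fun j _ => (hfac j).1) (fun j _ => (hfac j).2)
    obtain ⟨hy0, hy1⟩ := hy i
    have ha0 : (0:ℝ) ≤ 1 - (1 - μ) * y i := by nlinarith
    have ha1 : 1 - (1 - μ) * y i ≤ 1 := by nlinarith
    constructor
    · simp only [F]; nlinarith
    · simp only [F]; nlinarith
  -- F is bounded by the linear map
  have hFle : ∀ y : Fin n → ℝ, (∀ i, y i ∈ Set.Icc (0:ℝ) 1) →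
      ∀ i, F R β μ y i ≤ (M *ᵥ y) i := by
    intro y hy i
    have hb : ∀ j ∈ Finset.univ, (0:ℝ) ≤ β * R i j * y j := by
      intro j _
      obtain ⟨hR0, _⟩ := hR i j
      obtain ⟨hy0, _⟩ := hy j
      positivity
    have hb1 : ∀ j ∈ Finset.univ, β * R i j * y j ≤ 1 := by
      intro j _
      obtain ⟨hR0, hR1⟩ := hR i j
      obtain ⟨hy0, hy1⟩ := hy j
      nlinarith [mul_nonneg hR0 hy0, mul_le_mul hR1 hy1 hy0 zero_le_one,
        mul_le_mul_of_nonneg_left (mul_le_mul hR1 hy1 hy0 zero_le_one) hβ0.le]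
    have hw := weier Finset.univ (fun j => β * R i j * y j) hb hb1
    obtain ⟨hy0, hy1⟩ := hy i
    have ha0 : (0:ℝ) ≤ 1 - (1 - μ) * y i := by nlinarith
    have hsum0 : (0:ℝ) ≤ ∑ j, β * R i j * y j := Finset.sum_nonneg hb
    have hMv : (M *ᵥ y) i = (1 - μ) * y i + ∑ j, β * R i j * y j := by
      simp only [Matrix.mulVec, dotProduct]
      rw [show ∑ j, M i j * y j = ∑ j, ((1 - μ) * (if i = j then (1:ℝ) else 0) * y j
          + β * R i j * y j) from Finset.sum_congr rfl fun j _ => by rw [hMapp]; ring]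
      rw [Finset.sum_add_distrib]
      congr 1
      rw [Finset.sum_eq_single i]
      · simp
      · intro b _ hb'; simp [Ne.symm hb']
      · intro h; exact absurd (Finset.mem_univ i) h
    rw [hMv]
    simp only [F]
    set P := ∏ j, (1 - β * R i j * y j) with hP
    set S := ∑ j, β * R i j * y j with hS
    have : (1 - (1 - μ) * y i) * P ≥ (1 - (1 - μ) * y i) * (1 - S) :=
      mul_le_mul_of_nonneg_left hw ha0
    have haS : (0:ℝ) ≤ (1 - μ) * y i * S :=
      mul_nonneg (mul_nonneg (by linarith) hy0) hsum0
    have hexp : (1 - (1 - μ) * y i) * (1 - S)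
        = 1 - (1 - μ) * y i - S + (1 - μ) * y i * S := by ring
    linarith
  -- the key induction
  have key : ∀ k : ℕ, (∀ i, (F R β μ)^[k] x i ∈ Set.Icc (0:ℝ) 1) ∧
      (∀ i, (F R β μ)^[k] x i ≤ ((M ^ k) *ᵥ x) i) := by
    intro k
    induction k with
    | zero =>
      refine ⟨by simpa using hx, ?_⟩
      intro i
      simp [Matrix.one_mulVec]
    | succ k ih =>
      obtain ⟨ihc, ihb⟩ := ih
      have hstep : (F R β μ)^[k+1] x = F R β μ ((F R β μ)^[k] x) :=
        Function.iterate_succ_apply' _ _ _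
      constructor
      · intro i; rw [hstep]; exact hcube _ ihc i
      · intro i
        rw [hstep]
        have h1 : F R β μ ((F R β μ)^[k] x) i ≤ (M *ᵥ ((F R β μ)^[k] x)) i :=
          hFle _ ihc i
        have h2 : (M *ᵥ ((F R β μ)^[k] x)) i ≤ (M *ᵥ ((M ^ k) *ᵥ x)) i := by
          simp only [Matrix.mulVec, dotProduct]
          exact Finset.sum_le_sum fun j _ =>
            mul_le_mul_of_nonneg_left (ihb j) (hMnonneg i j)
        have h3 : M *ᵥ ((M ^ k) *ᵥ x) = (M ^ (k+1)) *ᵥ x := by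
          rw [Matrix.mulVec_mulVec, ← pow_succ']
        rw [← h3]
        exact le_trans h1 h2
  -- convergence
  rw [tendsto_pi_nhds]
  intro i
  simp only [Pi.zero_apply]
  apply squeeze_zero (fun k => (key k).1 i |>.1)
    (g := fun k => (n : ℝ) * ((n : ℝ) * c ^ k))
  · intro k
    calc (F R β μ)^[k] x i ≤ ((M ^ k) *ᵥ x) i := (key k).2 i
      _ ≤ (n : ℝ) * ((n : ℝ) * c ^ k) := by
        simp only [Matrix.mulVec, dotProduct]
        calc ∑ j, (M ^ k) i j * x j ≤ ∑ _j : Fin n, (n : ℝ) * c ^ k := by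
              apply Finset.sum_le_sum
              intro j _
              obtain ⟨hx0, hx1⟩ := hx j
              calc (M ^ k) i j * x j ≤ |(M ^ k) i j| * 1 :=
                    mul_le_mul (le_abs_self _) hx1 hx0 (abs_nonneg _)
                _ ≤ (n : ℝ) * c ^ k := by rw [mul_one]; exact hMk k i j
          _ = (n : ℝ) * ((n : ℝ) * c ^ k) := by
              simp [Finset.sum_const, nsmul_eq_mul, mul_assoc]
  · have : Tendsto (fun k : ℕ => c ^ k) atTop (nhds 0) :=
      tendsto_pow_atTop_nhds_zero_of_lt_one hc0 hc1
    have := this.const_mul (n : ℝ)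
    have := this.const_mul (n : ℝ)
    simpa using this
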